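/- Let α > 1 be a real number and let m ≥ 1 be an integer. The following are equivalent: (i) α has the Pisot property, i.e. there exists a nonzero real number ζ such that ‖ζ·α^k‖ → 0 as k → ∞; (ii) there exists an α-admissible sequence (n_k) whose phase sequence σ_k := n_{k+1} − α·n_k converges; (iii) there exists an α-admissible sequence (n_k) whose phase sequence σ_k := n_{k+1} − α·n_k converges to a cycle of exact period m, i.e. there exist real numbers L₀, …, L_{m−1} such that for each 0 ≤ j < m the subsequence (σ_{km+j})_{k≥0} converges to L_j, and no proper divisor d of m satisfies L_{(j+d) mod m} = L_j for all j. -/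

import Mathlib

open Filter Topology

/-- The phase sequence of a sequence of positive integers relative to `α` (with `β = 0`):
`σ_k = n_{k+1} - α n_k`. -/
noncomputable def phaseSeq (α : ℝ) (n : ℕ → ℕ) (k : ℕ) : ℝ :=
  (n (k + 1) : ℝ) - α * (n k : ℝ)

/-- An `α`-admissible sequence: strictly increasing positive integers whose phase sequence
`σ_k = n_{k+1} - α n_k` is bounded. -/
def AlphaAdmissible (α : ℝ) (n : ℕ → ℕ) : Prop :=
  StrictMono n ∧ (∀ k, 0 < n k) ∧ ∃ C : ℝ, ∀ k, |phaseSeq α n k| ≤ C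

/-- `α` has the Pisot property: there is a nonzero real `ζ` with `‖ζ α^k‖ → 0`, where
`‖·‖` is the distance to the nearest integer. -/
def HasPisotProperty (α : ℝ) : Prop :=
  ∃ ζ : ℝ, ζ ≠ 0 ∧
    Tendsto (fun k : ℕ => |ζ * α ^ k - (round (ζ * α ^ k) : ℝ)|) atTop (𝓝 0)

/-- If a function tends to 0 along every residue class mod `m`, it tends to 0. -/
lemma tendsto_of_residues (f : ℕ → ℝ) (m : ℕ) (hm : 1 ≤ m)
    (h : ∀ j < m, Tendsto (fun q => f (q * m + j)) atTop (𝓝 0)) :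
    Tendsto f atTop (𝓝 0) := by
  rw [Metric.tendsto_atTop]
  intro ε hε
  have key : ∀ j : Fin m, ∃ N, ∀ q ≥ N, dist (f (q * m + (j : ℕ))) 0 < ε := fun j =>
    Metric.tendsto_atTop.mp (h j j.2) ε hε
  choose N hN using key
  refine ⟨(Finset.univ.sup N + 1) * m, fun k hk => ?_⟩
  have hmpos : 0 < m := hm
  have hj : k % m < m := Nat.mod_lt _ hmpos
  have hq : Finset.univ.sup N + 1 ≤ k / m := (Nat.le_div_iff_mul_le hmpos).mpr hk
  have hk' : k / m * m + k % m = k := by rw [mul_comm]; exact Nat.div_add_mod k m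
  have hNle : N ⟨k % m, hj⟩ ≤ k / m :=
    le_trans (Finset.le_sup (Finset.mem_univ _)) (by omega)
  have := hN ⟨k % m, hj⟩ (k / m) hNle
  simpa [hk'] using this

/-- Core analysis: an admissible sequence whose phase differences at distance `m`
tend to zero yields the Pisot property. -/
lemma pisot_of_phase (α : ℝ) (hα : 1 < α) (n : ℕ → ℕ) (hmono : StrictMono n)
    (C : ℝ) (hC : ∀ k, |phaseSeq α n k| ≤ C) (m : ℕ) (hm : 1 ≤ m)
    (hd : Tendsto (fun k => phaseSeq α n (k + m) - phaseSeq α n k) atTop (𝓝 0)) :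
    HasPisotProperty α := by
  have hα0 : (0:ℝ) < α := lt_trans one_pos hα
  have hr0 : (0:ℝ) < α⁻¹ := inv_pos.mpr hα0
  have hr1 : α⁻¹ < 1 := inv_lt_one_of_one_lt₀ hα
  set σ : ℕ → ℝ := phaseSeq α n with hσdef
  have hC0 : 0 ≤ C := le_trans (abs_nonneg _) (hC 0)
  have hgeo : Summable (fun i : ℕ => α⁻¹ ^ (i + 1)) := by
    simpa [pow_succ] using (summable_geometric_of_lt_one hr0.le hr1).mul_right α⁻¹
  have hsum : ∀ k, Summable (fun i : ℕ => σ (k + i) * α⁻¹ ^ (i + 1)) := by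
    intro k
    refine Summable.of_norm_bounded (hgeo.mul_left C) (fun i => ?_)
    rw [norm_mul, Real.norm_eq_abs, Real.norm_eq_abs, abs_of_pos (pow_pos hr0 _)]
    exact mul_le_mul_of_nonneg_right (hC _) (pow_pos hr0 _).le
  set g : ℕ → ℝ := fun k => ∑' i, σ (k + i) * α⁻¹ ^ (i + 1) with hgdef
  have hgk : ∀ k, g k = ∑' i, σ (k + i) * α⁻¹ ^ (i + 1) := fun _ => rfl
  have hrec : ∀ k, α * g k = σ k + g (k + 1) := by
    intro k
    have h1 : g k = σ k * α⁻¹ + g (k + 1) * α⁻¹ := by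
      rw [hgk k, Summable.tsum_eq_zero_add (hsum k)]
      congr 1
      · simp
      · rw [hgk (k + 1), ← tsum_mul_right]
        congr 1; funext i
        have hkk : k + (i + 1) = (k + 1) + i := by omega
        rw [hkk, pow_succ]; ring
    calc α * g k = (σ k + g (k + 1)) * (α * α⁻¹) := by rw [h1]; ring
      _ = σ k + g (k + 1) := by rw [mul_inv_cancel₀ hα0.ne']; ring
  set ζ : ℝ := (n 0 : ℝ) + g 0 with hζdef
  have hx : ∀ k, ζ * α ^ k = (n k : ℝ) + g k := by
    intro k
    induction k with
    | zero => simp [hζdef]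
    | succ k ih =>
      have h2 := hrec k
      have h3 : σ k = (n (k + 1) : ℝ) - α * n k := rfl
      rw [pow_succ]
      calc ζ * (α ^ k * α) = (ζ * α ^ k) * α := by ring
        _ = ((n k : ℝ) + g k) * α := by rw [ih]
        _ = (n (k + 1) : ℝ) + g (k + 1) := by linear_combination h2 + h3
  set B : ℝ := ∑' i : ℕ, α⁻¹ ^ (i + 1) with hBdef
  have hB0 : 0 ≤ B := tsum_nonneg fun i => (pow_pos hr0 _).le
  have habs : ∀ (k : ℕ) (D : ℝ), (∀ i, |σ (k + m + i) - σ (k + i)| ≤ D) → 0 ≤ D →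
      |g (k + m) - g k| ≤ D * B := by
    intro k D hDb hD0
    have hsub : Summable (fun i => (σ (k + m + i) - σ (k + i)) * α⁻¹ ^ (i + 1)) := by
      have := (hsum (k + m)).sub (hsum k)
      simpa [sub_mul] using this
    have heq : g (k + m) - g k = ∑' i, (σ (k + m + i) - σ (k + i)) * α⁻¹ ^ (i + 1) := by
      rw [hgk (k + m), hgk k, ← Summable.tsum_sub (hsum (k + m)) (hsum k)]
      congr 1; funext i; ring
    rw [heq]
    calc |∑' i, (σ (k + m + i) - σ (k + i)) * α⁻¹ ^ (i + 1)|
        ≤ ∑' i, ‖(σ (k + m + i) - σ (k + i)) * α⁻¹ ^ (i + 1)‖ := by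
          rw [← Real.norm_eq_abs]
          exact norm_tsum_le_tsum_norm hsub.abs
      _ ≤ ∑' i, D * α⁻¹ ^ (i + 1) := by
          refine Summable.tsum_le_tsum (fun i => ?_) hsub.abs (hgeo.mul_left D)
          rw [norm_mul, Real.norm_eq_abs, Real.norm_eq_abs, abs_of_pos (pow_pos hr0 _)]
          exact mul_le_mul_of_nonneg_right (hDb i) (pow_pos hr0 _).le
      _ = D * B := tsum_mul_left
  have hgb : ∀ k, |g k| ≤ C * B := by
    intro k
    rw [hgk k]
    calc |∑' i, σ (k + i) * α⁻¹ ^ (i + 1)|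
        ≤ ∑' i, ‖σ (k + i) * α⁻¹ ^ (i + 1)‖ := by
          rw [← Real.norm_eq_abs]; exact norm_tsum_le_tsum_norm (hsum k).abs
      _ ≤ ∑' i, C * α⁻¹ ^ (i + 1) := by
          refine Summable.tsum_le_tsum (fun i => ?_) (hsum k).abs (hgeo.mul_left C)
          rw [norm_mul, Real.norm_eq_abs, Real.norm_eq_abs, abs_of_pos (pow_pos hr0 _)]
          exact mul_le_mul_of_nonneg_right (hC _) (pow_pos hr0 _).le
      _ = C * B := tsum_mul_left
  have hζpos : 0 < ζ := by
    set k₀ : ℕ := ⌈C * B⌉₊ + 1 with hk₀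
    have h4 : ζ * α ^ k₀ = (n k₀ : ℝ) + g k₀ := hx k₀
    have h5 : -(C * B) ≤ g k₀ := (abs_le.mp (hgb k₀)).1
    have h6 : C * B < (k₀ : ℝ) := by
      calc C * B ≤ (⌈C * B⌉₊ : ℝ) := Nat.le_ceil _
        _ < (k₀ : ℝ) := by rw [hk₀]; push_cast; linarith
    have h7 : (k₀ : ℝ) ≤ (n k₀ : ℝ) := by exact_mod_cast hmono.le_apply
    have h8 : 0 < ζ * α ^ k₀ := by linarith
    nlinarith [pow_pos hα0 k₀]
  have hgd : Tendsto (fun k => |g (k + m) - g k|) atTop (𝓝 0) := by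
    rw [Metric.tendsto_atTop]
    intro ε hε
    have hB1 : (0:ℝ) < B + 1 := by linarith
    have hε' : 0 < ε / (B + 1) := div_pos hε hB1
    obtain ⟨N, hN⟩ := Metric.tendsto_atTop.mp hd (ε / (B + 1)) hε'
    refine ⟨N, fun k hk => ?_⟩
    have hbd : |g (k + m) - g k| ≤ (ε / (B + 1)) * B := by
      refine habs k _ (fun i => ?_) hε'.le
      have hx2 : k + m + i = (k + i) + m := by omega
      rw [hx2]
      have := hN (k + i) (by omega)
      rw [Real.dist_eq, sub_zero] at this
      exact this.le
    have hfin : (ε / (B + 1)) * B < ε := by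
      have h9 : (ε / (B + 1)) * (B + 1) = ε := div_mul_cancel₀ ε hB1.ne'
      nlinarith
    rw [Real.dist_eq, sub_zero, abs_abs]
    linarith
  have hpm : 1 < α ^ m := one_lt_pow₀ hα (by omega)
  refine ⟨ζ * (α ^ m - 1), ne_of_gt (mul_pos hζpos (by linarith)), ?_⟩
  refine squeeze_zero (fun k => abs_nonneg _) (g := fun k => |g (k + m) - g k|) (fun k => ?_) hgd
  have e1 : ζ * (α ^ m - 1) * α ^ k = ((n (k + m) : ℝ) - n k) + (g (k + m) - g k) := by
    have h1 := hx (k + m)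
    have h2 := hx k
    rw [pow_add] at h1
    linear_combination h1 - h2
  have e2 := round_le (ζ * (α ^ m - 1) * α ^ k) ((n (k + m) : ℤ) - (n k : ℤ))
  have e3 : ζ * (α ^ m - 1) * α ^ k - (((n (k + m) : ℤ) - (n k : ℤ) : ℤ) : ℝ)
      = g (k + m) - g k := by push_cast; linear_combination e1
  calc |ζ * (α ^ m - 1) * α ^ k - (round (ζ * (α ^ m - 1) * α ^ k) : ℝ)|
      ≤ |ζ * (α ^ m - 1) * α ^ k - (((n (k + m) : ℤ) - (n k : ℤ) : ℤ) : ℝ)| := e2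
    _ = |g (k + m) - g k| := by rw [e3]

/-- Construction: from the Pisot property, build an admissible sequence whose phase
is `o(1)` plus a prescribed 0/1 perturbation term. -/
lemma construct_admissible (α : ℝ) (hα : 1 < α) (hp : HasPisotProperty α)
    (e : ℕ → ℕ) (he : ∀ k, e k ≤ 1) :
    ∃ n : ℕ → ℕ, AlphaAdmissible α n ∧
      Tendsto (fun k => phaseSeq α n k - ((e (k + 1) : ℝ) - α * e k)) atTop (𝓝 0) := by
  have hα0 : (0:ℝ) < α := lt_trans one_pos hα
  obtain ⟨ζ₀, hζ₀, ht₀⟩ := hp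
  have hroundsym : ∀ x : ℝ, |(-x) - round (-x)| = |x - round x| := by
    intro x
    apply le_antisymm
    · calc |(-x) - round (-x)| ≤ |(-x) - ((-(round x) : ℤ) : ℝ)| := round_le _ _
        _ = |x - round x| := by
          push_cast
          rw [show -x - -(round x : ℝ) = -(x - round x) by ring, abs_neg]
    · calc |x - round x| ≤ |x - ((-(round (-x)) : ℤ) : ℝ)| := round_le _ _
        _ = |(-x) - round (-x)| := by
          push_cast
          rw [show x - -((round (-x)) : ℝ) = -((-x) - round (-x)) by ring, abs_neg]
  have hpos : ∃ ζ : ℝ, 0 < ζ ∧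
      Tendsto (fun k : ℕ => |ζ * α ^ k - (round (ζ * α ^ k) : ℝ)|) atTop (𝓝 0) := by
    rcases hζ₀.lt_or_gt with h | h
    · refine ⟨-ζ₀, by linarith, ?_⟩
      have heq : (fun k : ℕ => |(-ζ₀) * α ^ k - (round ((-ζ₀) * α ^ k) : ℝ)|)
          = fun k : ℕ => |ζ₀ * α ^ k - (round (ζ₀ * α ^ k) : ℝ)| := by
        funext k
        rw [neg_mul]
        exact hroundsym _
      rw [heq]; exact ht₀
    · exact ⟨ζ₀, h, ht₀⟩
  obtain ⟨ζ, hζpos, hδa⟩ := hpos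
  obtain ⟨δ, hδdef⟩ : ∃ δ : ℕ → ℝ, ∀ k, δ k = ζ * α ^ k - (round (ζ * α ^ k) : ℝ) :=
    ⟨_, fun _ => rfl⟩
  have hδ0 : Tendsto δ atTop (𝓝 0) := by
    rw [tendsto_zero_iff_norm_tendsto_zero]
    have heq : (fun k => ‖δ k‖) = fun k : ℕ => |ζ * α ^ k - (round (ζ * α ^ k) : ℝ)| := by
      funext k; rw [Real.norm_eq_abs, hδdef]
    rw [heq]; exact hδa
  have hgrow : Tendsto (fun k : ℕ => ζ * α ^ k) atTop atTop :=
    (tendsto_pow_atTop_atTop_of_one_lt hα).const_mul_atTop hζpos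
  have hEv : ∀ᶠ k in atTop, |δ k| ≤ 1/8 ∧ 3 / (α - 1) ≤ ζ * α ^ k ∧ 2 ≤ ζ * α ^ k := by
    have A : ∀ᶠ k in atTop, |δ k| ≤ 1/8 := by
      obtain ⟨N, hN⟩ := Metric.tendsto_atTop.mp hδ0 (1/8) (by norm_num)
      rw [eventually_atTop]
      refine ⟨N, fun k hk => ?_⟩
      have := hN k hk
      rw [Real.dist_eq, sub_zero] at this
      exact this.le
    have B : ∀ᶠ k in atTop, 3 / (α - 1) ≤ ζ * α ^ k := hgrow.eventually_ge_atTop _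
    have Cc : ∀ᶠ k in atTop, 2 ≤ ζ * α ^ k := hgrow.eventually_ge_atTop _
    filter_upwards [A, B, Cc] with k h1 h2 h3
    exact ⟨h1, h2, h3⟩
  obtain ⟨K, hK⟩ := eventually_atTop.mp hEv
  obtain ⟨R, hRdef⟩ : ∃ R : ℕ → ℤ, ∀ j, R j = round (ζ * α ^ j) := ⟨_, fun _ => rfl⟩
  have hαm1 : (0:ℝ) < α - 1 := by linarith
  have hRval : ∀ j, (R j : ℝ) = ζ * α ^ j - δ j := by
    intro j; rw [hRdef, hδdef]; ring
  have hR1 : ∀ j ≥ K, (1 : ℤ) ≤ R j := by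
    intro j hj
    obtain ⟨h1, _, h3⟩ := hK j hj
    have h4 := (abs_le.mp h1).2
    have h5 : (1 : ℝ) ≤ (R j : ℝ) := by rw [hRval j]; linarith
    exact_mod_cast h5
  obtain ⟨n, hndef⟩ : ∃ n : ℕ → ℕ, ∀ k, n k = (R (K + k)).toNat + e k := ⟨_, fun _ => rfl⟩
  have hcast : ∀ k, ((n k : ℕ) : ℝ) = (R (K + k) : ℝ) + (e k : ℝ) := by
    intro k
    have h1 : (0 : ℤ) ≤ R (K + k) := le_trans (by norm_num) (hR1 _ (by omega))
    have h2 : (((R (K + k)).toNat : ℕ) : ℝ) = ((R (K + k)) : ℝ) := by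
      exact_mod_cast Int.toNat_of_nonneg h1
    rw [hndef, Nat.cast_add, h2]
  have hdiff : ∀ k, ζ * α ^ (K + k) * (α - 1) ≥ 3 := by
    intro k
    obtain ⟨_, h2, _⟩ := hK (K + k) (by omega)
    rw [div_le_iff₀ hαm1] at h2
    linarith
  have hδsmall : ∀ k, |δ (K + k)| ≤ 1/8 := fun k => (hK (K + k) (by omega)).1
  have hpow : ∀ k, ζ * α ^ (K + (k + 1)) = ζ * α ^ (K + k) * α := by
    intro k
    rw [show K + (k + 1) = (K + k) + 1 by omega, pow_succ]; ring
  have hstep : ∀ k, (n k : ℝ) + 1 ≤ (n (k + 1) : ℝ) := by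
    intro k
    rw [hcast k, hcast (k + 1), hRval, hRval]
    have h1 := (abs_le.mp (hδsmall k)).1
    have h1' := (abs_le.mp (hδsmall k)).2
    have h2 := (abs_le.mp (hδsmall (k + 1))).1
    have h2' := (abs_le.mp (hδsmall (k + 1))).2
    have h3 := hdiff k
    have h5 : (0:ℝ) ≤ (e (k + 1) : ℝ) := Nat.cast_nonneg _
    have h6 : (e k : ℝ) ≤ 1 := by exact_mod_cast he k
    rw [hpow k]
    nlinarith
  have hmono : StrictMono n := by
    apply strictMono_nat_of_lt_succ
    intro k
    have h1 := hstep k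
    have h2 : (n k : ℝ) < (n (k + 1) : ℝ) := by linarith
    exact_mod_cast h2
  have hposn : ∀ k, 0 < n k := by
    intro k
    have h1 : (1 : ℤ).toNat ≤ (R (K + k)).toNat := Int.toNat_le_toNat (hR1 _ (by omega))
    simp only [Int.toNat_one] at h1
    rw [hndef]
    omega
  have hph : ∀ k, phaseSeq α n k
      = α * δ (K + k) - δ (K + (k + 1)) + ((e (k + 1) : ℝ) - α * e k) := by
    intro k
    show (n (k + 1) : ℝ) - α * (n k : ℝ) = _
    rw [hcast (k + 1), hcast k, hRval, hRval, hpow k]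
    ring
  have hbound : ∀ k, |phaseSeq α n k| ≤ 4 * α := by
    intro k
    rw [hph k, abs_le]
    have h1 := (abs_le.mp (hδsmall k)).1
    have h1' := (abs_le.mp (hδsmall k)).2
    have h2 := (abs_le.mp (hδsmall (k + 1))).1
    have h2' := (abs_le.mp (hδsmall (k + 1))).2
    have h5 : (0:ℝ) ≤ (e (k + 1) : ℝ) := Nat.cast_nonneg _
    have h5' : (e (k + 1) : ℝ) ≤ 1 := by exact_mod_cast he (k + 1)
    have h6 : (0:ℝ) ≤ (e k : ℝ) := Nat.cast_nonneg _
    have h6' : (e k : ℝ) ≤ 1 := by exact_mod_cast he k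
    constructor <;> nlinarith
  have hcomp1 : Tendsto (fun k : ℕ => K + k) atTop atTop :=
    tendsto_atTop_mono (fun k => Nat.le_add_left k K) tendsto_id
  have hcomp2 : Tendsto (fun k : ℕ => K + (k + 1)) atTop atTop :=
    tendsto_atTop_mono (fun k => le_trans (Nat.le_succ k) (Nat.le_add_left _ K)) tendsto_id
  have h1 : Tendsto (fun k => δ (K + k)) atTop (𝓝 0) := hδ0.comp hcomp1
  have h2 : Tendsto (fun k => δ (K + (k + 1))) atTop (𝓝 0) := hδ0.comp hcomp2
  refine ⟨n, ⟨hmono, hposn, 4 * α, hbound⟩, ?_⟩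
  have heqf : (fun k => phaseSeq α n k - ((e (k + 1) : ℝ) - α * e k))
      = fun k => α * δ (K + k) - δ (K + (k + 1)) := by
    funext k; rw [hph k]; ring
  rw [heqf]
  simpa using (h1.const_mul α).sub h2

/-- For `α > 1` and `m ≥ 1`, the following are equivalent: (i) `α` has the Pisot property;
(ii) there is an `α`-admissible sequence with converging phase sequence; (iii) there is an
`α`-admissible sequence whose phase sequence converges to a cycle of exact period `m`. -/
theorem pisot_iff_admissible_phase_converges (α : ℝ) (hα : 1 < α) (m : ℕ) (hm : 1 ≤ m) :
    (HasPisotProperty α ↔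
      ∃ n : ℕ → ℕ, AlphaAdmissible α n ∧ ∃ L : ℝ, Tendsto (phaseSeq α n) atTop (𝓝 L)) ∧
    ((∃ n : ℕ → ℕ, AlphaAdmissible α n ∧ ∃ L : ℝ, Tendsto (phaseSeq α n) atTop (𝓝 L)) ↔
      (∃ n : ℕ → ℕ, AlphaAdmissible α n ∧ ∃ L : ℕ → ℝ,
        (∀ j < m, Tendsto (fun k => phaseSeq α n (k * m + j)) atTop (𝓝 (L j))) ∧
        ¬ ∃ d : ℕ, d ∣ m ∧ d < m ∧ ∀ j < m, L ((j + d) % m) = L j)) := by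
  -- (i) → (ii)
  have h12 : HasPisotProperty α →
      ∃ n : ℕ → ℕ, AlphaAdmissible α n ∧ ∃ L : ℝ, Tendsto (phaseSeq α n) atTop (𝓝 L) := by
    intro hp
    obtain ⟨n, hadm, ht⟩ := construct_admissible α hα hp (fun _ => 0) (fun _ => by norm_num)
    exact ⟨n, hadm, 0, by simpa using ht⟩
  -- (ii) → (i)
  have h21 : (∃ n : ℕ → ℕ, AlphaAdmissible α n ∧ ∃ L : ℝ, Tendsto (phaseSeq α n) atTop (𝓝 L)) →
      HasPisotProperty α := by
    rintro ⟨n, ⟨hmono, _, C, hC⟩, L, hL⟩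
    refine pisot_of_phase α hα n hmono C hC 1 le_rfl ?_
    have h1 : Tendsto (fun k => phaseSeq α n (k + 1)) atTop (𝓝 L) :=
      hL.comp (tendsto_add_atTop_nat 1)
    simpa using h1.sub hL
  -- (iii) → (i)
  have h31 : (∃ n : ℕ → ℕ, AlphaAdmissible α n ∧ ∃ L : ℕ → ℝ,
        (∀ j < m, Tendsto (fun k => phaseSeq α n (k * m + j)) atTop (𝓝 (L j))) ∧
        ¬ ∃ d : ℕ, d ∣ m ∧ d < m ∧ ∀ j < m, L ((j + d) % m) = L j) →
      HasPisotProperty α := by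
    rintro ⟨n, ⟨hmono, _, C, hC⟩, L, hL, -⟩
    refine pisot_of_phase α hα n hmono C hC m hm ?_
    apply tendsto_of_residues _ m hm
    intro j hj
    have h1 := hL j hj
    have h2 : Tendsto (fun q => phaseSeq α n ((q + 1) * m + j)) atTop (𝓝 (L j)) :=
      h1.comp (tendsto_add_atTop_nat 1)
    have h3 : (fun q => phaseSeq α n ((q + 1) * m + j) - phaseSeq α n (q * m + j))
        = fun q => phaseSeq α n (q * m + j + m) - phaseSeq α n (q * m + j) := by
      funext q; congr 2; ring
    have h4 := h2.sub h1
    rw [h3] at h4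
    simpa using h4
  -- (i) → (iii)
  have h13 : HasPisotProperty α →
      (∃ n : ℕ → ℕ, AlphaAdmissible α n ∧ ∃ L : ℕ → ℝ,
        (∀ j < m, Tendsto (fun k => phaseSeq α n (k * m + j)) atTop (𝓝 (L j))) ∧
        ¬ ∃ d : ℕ, d ∣ m ∧ d < m ∧ ∀ j < m, L ((j + d) % m) = L j) := by
    intro hp
    obtain ⟨e, hedef⟩ : ∃ e : ℕ → ℕ, ∀ k, e k = if k % m = 0 then 1 else 0 :=
      ⟨_, fun _ => rfl⟩
    have he1 : ∀ k, e k ≤ 1 := fun k => by rw [hedef]; split <;> norm_num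
    obtain ⟨n, hadm, ht⟩ := construct_admissible α hα hp e he1
    obtain ⟨L, hLdef⟩ : ∃ L : ℕ → ℝ, ∀ j, L j =
        (if (j + 1) % m = 0 then (1:ℝ) else 0) - α * (if j % m = 0 then (1:ℝ) else 0) :=
      ⟨_, fun _ => rfl⟩
    refine ⟨n, hadm, L, ?_, ?_⟩
    · intro j hj
      have hcomp : Tendsto (fun q : ℕ => q * m + j) atTop atTop := by
        refine tendsto_atTop_mono (fun q => ?_) tendsto_id
        calc q = q * 1 := (mul_one q).symm
          _ ≤ q * m := Nat.mul_le_mul_left q hm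
          _ ≤ q * m + j := Nat.le_add_right _ _
      have h0 : Tendsto (fun q : ℕ => phaseSeq α n (q * m + j) -
          ((e (q * m + j + 1) : ℝ) - α * e (q * m + j))) atTop (𝓝 0) := ht.comp hcomp
      have heq : (fun q : ℕ => phaseSeq α n (q * m + j) -
            ((e (q * m + j + 1) : ℝ) - α * e (q * m + j)))
          = fun q : ℕ => phaseSeq α n (q * m + j) - L j := by
        funext q
        congr 1
        have hm1 : (q * m + j) % m = j % m := by
          rw [Nat.add_comm]; exact Nat.add_mul_mod_self_right j q m
        have hm2 : (q * m + j + 1) % m = (j + 1) % m := by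
          rw [Nat.add_assoc, Nat.add_comm (q * m)]
          exact Nat.add_mul_mod_self_right (j + 1) q m
        rw [hedef, hedef, hm1, hm2, hLdef]
        split_ifs <;> norm_num
      rw [heq] at h0
      exact tendsto_sub_nhds_zero_iff.mp h0
    · rintro ⟨d, hdvd, hlt, hper⟩
      have hd0 : d ≠ 0 := by
        rintro rfl
        exact absurd (Nat.eq_zero_of_zero_dvd hdvd) (by omega)
      have hm2 : 2 ≤ m := by omega
      have hL0 : L 0 = -α := by
        rw [hLdef, Nat.zero_add, Nat.mod_eq_of_lt (show 1 < m by omega), Nat.zero_mod]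
        norm_num
      have hLd : 0 ≤ L d := by
        rw [hLdef, Nat.mod_eq_of_lt hlt, if_neg hd0]
        split_ifs <;> norm_num
      have hcyc := hper 0 (by omega)
      rw [Nat.zero_add, Nat.mod_eq_of_lt hlt, hL0] at hcyc
      rw [hcyc] at hLd
      linarith
  exact ⟨⟨h12, h21⟩, ⟨fun h => h13 (h21 h), fun h => h12 (h31 h)⟩⟩
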